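/- In the transfinite construction over a full model N: for every ordinal α and every term t, if H t ⇝_α ⊤ then t ⇝_α ⊤ or t ⇝_{α+1} ⊥. -/

import Mathlib

/-! Infrastructure: the transfinite model construction over a full model of
classical higher-order logic, following Czajka, "A semantic approach to illative
combinatory logic", Section 4. -/

namespace ILM

/-- Type-free λ-terms over a set `C` of primitive constants (de Bruijn representation). -/
inductive Tm (C : Type) : Type
  | var : Nat → Tm C
  | const : C → Tm C
  | app : Tm C → Tm C → Tm C
  | lam : Tm C → Tm C

namespace Tm

variable {C : Type}

/-- Renaming of free de Bruijn variables. -/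
def rename (f : Nat → Nat) : Tm C → Tm C
  | .var n => .var (f n)
  | .const c => .const c
  | .app a b => .app (a.rename f) (b.rename f)
  | .lam a => .lam (a.rename fun n => match n with | 0 => 0 | m + 1 => f m + 1)

/-- Shift all free variables up by one. -/
def lift (t : Tm C) : Tm C := t.rename (· + 1)

/-- Simultaneous substitution. -/
def bind (σ : Nat → Tm C) : Tm C → Tm C
  | .var n => σ n
  | .const c => .const c
  | .app a b => .app (a.bind σ) (b.bind σ)
  | .lam a => .lam (a.bind fun n => match n with | 0 => .var 0 | m + 1 => (σ m).lift)

/-- Substitution of `s` for the variable `0` (β-contraction of `(λ.t) s`). -/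
def subst0 (t s : Tm C) : Tm C := t.bind fun n => match n with | 0 => s | m + 1 => .var m

end Tm

/-- Extended types `T⁺`: the constructors generate all expressions
`o | B | arr | ω | ε`; the grammar `T⁺ ::= T₁ | ω | ε`, `T₁ ::= T | T₁→T₁ | ω→T₁`
is captured by the predicate `IsT1` below. -/
inductive ETy (B : Type) : Type
  | o : ETy B
  | base : B → ETy B
  | arr : ETy B → ETy B → ETy B
  | omega : ETy B
  | eps : ETy B
deriving DecidableEq

/-- Membership in `T₁` (so `T⁺ = T₁ ∪ {ω, ε}`). -/
inductive IsT1 {B : Type} : ETy B → Prop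
  | o : IsT1 .o
  | base (b : B) : IsT1 (.base b)
  | arr {τ1 τ2 : ETy B} : IsT1 τ1 → IsT1 τ2 → IsT1 (.arr τ1 τ2)
  | omegaArr {τ2 : ETy B} : IsT1 τ2 → IsT1 (.arr .omega τ2)

/-- Membership in `T⁺`. -/
def IsTp {B : Type} (τ : ETy B) : Prop := IsT1 τ ∨ τ = .omega ∨ τ = .eps

/-- The normalized arrow `τ₁ → τ₂`, implementing the notational conventions
`τ→ε = ε` (for `τ ≠ ε`), `ε→τ = ω` and `τ→ω = ω`. -/
def arrN {B : Type} : ETy B → ETy B → ETy B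
  | _, .omega => .omega
  | .eps, _ => .omega
  | _, .eps => .eps
  | τ1, τ2 => .arr τ1 τ2

/-- The rank of a type. -/
def rank {B : Type} : ETy B → Nat
  | .arr τ1 τ2 => max (rank τ1 + 1) (rank τ2)
  | _ => 1

/-- A canonical system over domains `D` for the base types: the primitive
constants `Σ⁺ = {Ξ, L} ∪ {A_τ : τ ∈ B} ∪ ⋃_τ Σ_τ`, the sets `T_τ` of canonical
terms of each type, the distinguished canonical constants `⊤, ⊥` of type `o`,
and the function `F` associating to each canonical term of a function type its
set-theoretic function, as constructed in the paper from a full model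
`N = ⟨{D_τ}, I⟩` of classical higher-order logic.  The fields axiomatize the
construction: the sets of canonical terms of distinct types are disjoint sets of
closed normal terms (`T_ω` is the set of all terms, `T_ε = ∅`), for `τ₁ ≠ ω`
the canonical terms of type `τ₁→τ₂` are constants corresponding bijectively
(via `F`) to *all* set-theoretic functions from `T_{τ₁}` to `T_{τ₂}` (this is
where fullness of `N` enters), the canonical terms of type `ω→τ₂` are the terms
`λx.ρ` with `ρ ∈ T_{τ₂}` (with `F` giving constant functions), the canonical
terms of base type `b` correspond bijectively to the domain `D b`, and those
of type `o` are exactly `⊤` and `⊥`. -/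
structure CanSys (B : Type) (D : B → Type) where
  /-- the primitive constants `Σ⁺` -/
  C : Type
  cXi : C
  cL : C
  cA : B → C
  /-- the sets `T_τ` of canonical terms -/
  TT : ETy B → Set (Tm C)
  /-- the canonical constant `⊤ ∈ Σ_o` -/
  top : Tm C
  /-- the canonical constant `⊥ ∈ Σ_o` -/
  bot : Tm C
  /-- `F τ₁ τ₂ ρ t` : the value at `t ∈ T_{τ₁}` of the function associated with
  the canonical term `ρ ∈ T_{τ₁→τ₂}` -/
  F : ETy B → ETy B → Tm C → Tm C → Tm C
  hXiL : cXi ≠ cL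
  hXiA : ∀ b, cXi ≠ cA b
  hLA : ∀ b, cL ≠ cA b
  hAinj : Function.Injective cA
  TT_omega : TT .omega = Set.univ
  TT_eps : TT .eps = ∅
  TT_invalid : ∀ τ : ETy B, ¬ IsT1 τ → τ ≠ .omega → TT τ = ∅
  TT_o : TT .o = {top, bot}
  top_ne_bot : top ≠ bot
  TT_const : ∀ τ : ETy B, IsT1 τ → (∀ τ2, τ ≠ .arr .omega τ2) →
    ∀ t ∈ TT τ, ∃ c : C, t = .const c
  TT_base_equiv : ∀ b : B, Nonempty (D b ≃ TT (.base b))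
  TT_omega_arr : ∀ τ2 : ETy B, IsT1 τ2 → TT (.arr .omega τ2) = Tm.lam '' TT τ2
  F_omega : ∀ τ2 : ETy B, ∀ ρ ∈ TT τ2, ∀ t : Tm C, F .omega τ2 (.lam ρ) t = ρ
  F_mapsto : ∀ τ1 τ2 : ETy B, IsT1 (.arr τ1 τ2) →
    ∀ ρ ∈ TT (.arr τ1 τ2), ∀ t ∈ TT τ1, F τ1 τ2 ρ t ∈ TT τ2
  F_full : ∀ τ1 τ2 : ETy B, IsT1 (.arr τ1 τ2) → τ1 ≠ .omega →
    ∀ g : Tm C → Tm C, (∀ t ∈ TT τ1, g t ∈ TT τ2) →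
      ∃ ρ ∈ TT (.arr τ1 τ2), ∀ t ∈ TT τ1, F τ1 τ2 ρ t = g t
  F_inj : ∀ τ1 τ2 : ETy B, IsT1 (.arr τ1 τ2) → τ1 ≠ .omega →
    ∀ ρ ∈ TT (.arr τ1 τ2), ∀ ρ' ∈ TT (.arr τ1 τ2),
      (∀ t ∈ TT τ1, F τ1 τ2 ρ t = F τ1 τ2 ρ' t) → ρ = ρ'
  TT_disj : ∀ τ τ' : ETy B, τ ≠ τ' → τ ≠ .omega → τ' ≠ .omega →
    Disjoint (TT τ) (TT τ')
  prim_notin : ∀ τ : ETy B, τ ≠ .omega →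
    Tm.const cXi ∉ TT τ ∧ Tm.const cL ∉ TT τ ∧ ∀ b, Tm.const (cA b) ∉ TT τ
  cover : ∀ c : C, c = cXi ∨ c = cL ∨ (∃ b, c = cA b) ∨
    ∃ τ : ETy B, τ ≠ .omega ∧ Tm.const c ∈ TT τ

namespace CanSys

variable {B : Type} {D : B → Type} (S : CanSys B D)

/-- The term `Ξ`. -/
def XiT : Tm S.C := .const S.cXi

/-- The term `L`. -/
def LT : Tm S.C := .const S.cL

/-- The term `A_b`. -/
def AT (b : B) : Tm S.C := .const (S.cA b)

/-- `K t = λx.t` with `x ∉ FV(t)`. -/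
def Kt (t : Tm S.C) : Tm S.C := .lam t.lift

/-- `H t = L (K t)`. -/
def Ht (t : Tm S.C) : Tm S.C := .app S.LT (S.Kt t)

/-- The term `H = λx. L (K x)`. -/
def Hterm : Tm S.C := .lam (.app S.LT (.lam (.var 1)))

/-- `F t₁ t₂`, written out according to the notational convention:
`λf. Ξ t₁ (λx. t₂ (f x))` if `t₂` is not a λ-abstraction, and
`λf. Ξ t₁ (λx. q₂[z/(f x)])` if `t₂ = λz. q₂`. -/
def Ft (t1 t2 : Tm S.C) : Tm S.C :=
  .lam (.app (.app S.XiT t1.lift)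
    (match t2 with
     | .lam b => .lam (b.bind fun n => match n with
         | 0 => .app (.var 1) (.var 0)
         | m + 1 => .var (m + 2))
     | t2 => .lam (.app t2.lift.lift (.app (.var 1) (.var 0)))))

end CanSys


mutual
  /-- One-step reduction `→_{≤α}` of the reduction system `R_α`: the context
  closure of β- and η-reduction together with the rules `c t → F(c)(ρ₁)` for
  canonical constants `c ∈ Σ_{τ₁→τ₂}` (`τ₁ ≠ ω`) and `t ≻_{<α} ρ₁`. -/
  inductive Step {B : Type} {D : B → Type} (S : CanSys B D) :
      Ordinal.{0} → Tm S.C → Tm S.C → Prop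
    | beta (α : Ordinal.{0}) (t s : Tm S.C) : Step S α (.app (.lam t) s) (t.subst0 s)
    | eta (α : Ordinal.{0}) (t : Tm S.C) : Step S α (.lam (.app t.lift (.var 0))) t
    | crule {α γ : Ordinal.{0}} (hγ : γ < α) {τ1 τ2 : ETy B} (h1 : τ1 ≠ .omega)
        {c : Tm S.C} (hc : c ∈ S.TT (.arr τ1 τ2)) {ρ1 : Tm S.C} (hρ1 : ρ1 ∈ S.TT τ1)
        {t : Tm S.C} (hs : Succ S γ t ρ1) :
        Step S α (.app c t) (S.F τ1 τ2 c ρ1)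
    | appL {α : Ordinal.{0}} {t t' : Tm S.C} (s : Tm S.C) :
        Step S α t t' → Step S α (.app t s) (.app t' s)
    | appR (t : Tm S.C) {α : Ordinal.{0}} {s s' : Tm S.C} :
        Step S α s s' → Step S α (.app t s) (.app t s')
    | lam {α : Ordinal.{0}} {t t' : Tm S.C} :
        Step S α t t' → Step S α (.lam t) (.lam t')

  /-- Many-step reduction `↠_{≤α}` (the reflexive-transitive closure of `→_{≤α}`). -/
  inductive Steps {B : Type} {D : B → Type} (S : CanSys B D) :
      Ordinal.{0} → Tm S.C → Tm S.C → Prop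
    | refl (α : Ordinal.{0}) (t : Tm S.C) : Steps S α t t
    | tail {α : Ordinal.{0}} {t u v : Tm S.C} :
        Steps S α t u → Step S α u v → Steps S α t v

  /-- `t ⇝_α ρ` : `t ↠_{≤α} t' ≻_α ρ` for some `t'`. -/
  inductive Lead {B : Type} {D : B → Type} (S : CanSys B D) :
      Ordinal.{0} → Tm S.C → Tm S.C → Prop
    | mk {α : Ordinal.{0}} {t t' ρ : Tm S.C} :
        Steps S α t t' → Succ S α t' ρ → Lead S α t ρ

  /-- `t ⇝_{<α} ρ` : `t ⇝_γ ρ` for some `γ < α`. -/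
  inductive LeadLt {B : Type} {D : B → Type} (S : CanSys B D) :
      Ordinal.{0} → Tm S.C → Tm S.C → Prop
    | mk {α γ : Ordinal.{0}} {t ρ : Tm S.C} :
        γ < α → Lead S γ t ρ → LeadLt S α t ρ

  /-- The typing relation `t ∼_α τ` (Definition 4.4), by the rules
  (A), (H), (Kω), (Kε), (F) and (Fω). -/
  inductive Sim {B : Type} {D : B → Type} (S : CanSys B D) :
      Ordinal.{0} → Tm S.C → ETy B → Prop
    | ofA (α : Ordinal.{0}) (b : B) : Sim S α (S.AT b) (.base b)
    | ofH (α : Ordinal.{0}) : Sim S α S.Hterm .o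
    | ofKom {α : Ordinal.{0}} {t : Tm S.C} :
        LeadLt S α t S.top → Sim S α (S.Kt t) .omega
    | ofKeps {α : Ordinal.{0}} {t : Tm S.C} :
        LeadLt S α t S.bot → Sim S α (S.Kt t) .eps
    | ofF {α γ1 γ2 : Ordinal.{0}} (h1 : γ1 < α) (h2 : γ2 < α)
        {t1 t2 : Tm S.C} {τ1 τ2 : ETy B} :
        Sim S γ1 t1 τ1 → Sim S γ2 t2 τ2 → Sim S α (S.Ft t1 t2) (arrN τ1 τ2)
    | ofFom {α γ : Ordinal.{0}} (hγ : γ < α) {t1 t2 : Tm S.C} :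
        Sim S γ t1 .eps → Sim S α (S.Ft t1 t2) .omega

  /-- The relation `t ≻_α ρ` between terms and canonical terms (Definition 4.5). -/
  inductive Succ {B : Type} {D : B → Type} (S : CanSys B D) :
      Ordinal.{0} → Tm S.C → Tm S.C → Prop
    /- `ρ ≻_α ρ` for canonical `ρ` -/
    | refl {τ : ETy B} (hτ : τ ≠ .omega) {ρ : Tm S.C} (hρ : ρ ∈ S.TT τ)
        (α : Ordinal.{0}) : Succ S α ρ ρ
    /- `t ≻_α ρ` when `ρ` has canonical type `τ₁→τ₂` (possibly `τ₁ = ω`) and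
       `t t₁ ⇝_{<α} F(ρ)(t₁)` for all `t₁ ∈ T_{τ₁}` -/
    | fn {τ1 τ2 : ETy B} {ρ : Tm S.C} (hρ : ρ ∈ S.TT (.arr τ1 τ2))
        {α : Ordinal.{0}} {t : Tm S.C}
        (h : ∀ t1 ∈ S.TT τ1, LeadLt S α (.app t t1) (S.F τ1 τ2 ρ t1)) :
        Succ S α t ρ
    /- base postulates for `t ≻_α ⊤` -/
    | topLA (α : Ordinal.{0}) (b : B) : Succ S α (.app S.LT (S.AT b)) S.top
    | topLH (α : Ordinal.{0}) : Succ S α (.app S.LT S.Hterm) S.top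
    | topA {b : B} {c : Tm S.C} (hc : c ∈ S.TT (.base b)) (α : Ordinal.{0}) :
        Succ S α (.app (S.AT b) c) S.top
    | topH {c : Tm S.C} (hc : c = S.top ∨ c = S.bot) (α : Ordinal.{0}) :
        Succ S α (S.Ht c) S.top
    /- `(Ξ_i^⊤)` -/
    | xiTop {α : Ordinal.{0}} (hα : 0 < α) {t1 t2 : Tm S.C} {τ : ETy B}
        (h1 : Sim S α t1 τ) (h2 : ∀ t3 ∈ S.TT τ, LeadLt S α (.app t2 t3) S.top) :
        Succ S α (.app (.app S.XiT t1) t2) S.top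
    /- `(Ξ_H^⊤)` -/
    | xiHTop {α : Ordinal.{0}} (hα : 0 < α) {t1 t2 : Tm S.C} {τ : ETy B}
        (h1 : Sim S α t1 τ)
        (h2 : ∀ t3 ∈ S.TT τ, LeadLt S α (S.Ht (.app t2 t3)) S.top) :
        Succ S α (S.Ht (.app (.app S.XiT t1) t2)) S.top
    /- `(F_L^⊤)`, first case: `t₁ ∼_α ε` -/
    | flTopEps {α : Ordinal.{0}} (hα : 0 < α) {t1 t2 : Tm S.C}
        (h1 : Sim S α t1 .eps) :
        Succ S α (.app S.LT (S.Ft t1 t2)) S.top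
    /- `(F_L^⊤)`, second case: `t₁ ∼_α τ` for some `τ ≠ ε` and `L t₂ ⇝_{<α} ⊤` -/
    | flTop {α : Ordinal.{0}} (hα : 0 < α) {t1 t2 : Tm S.C} {τ : ETy B}
        (hτ : τ ≠ .eps) (h1 : Sim S α t1 τ) (h2 : LeadLt S α (.app S.LT t2) S.top) :
        Succ S α (.app S.LT (S.Ft t1 t2)) S.top
    /- `(H_i^⊤)` -/
    | hiTop {α : Ordinal.{0}} (hα : 0 < α) {t1 : Tm S.C} (h : LeadLt S α t1 S.top) :
        Succ S α (S.Ht t1) S.top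
    /- `(Ξ^⊥)` -/
    | xiBot {α : Ordinal.{0}} (hα : 0 < α) {t1 t2 : Tm S.C} {τ : ETy B}
        {γ : Ordinal.{0}} (hγ : γ < α)
        (hH : Succ S γ (S.Ht (.app (.app S.XiT t1) t2)) S.top)
        (h1 : Sim S α t1 τ) {t3 : Tm S.C} (h3 : t3 ∈ S.TT τ)
        (hb : LeadLt S α (.app t2 t3) S.bot) :
        Succ S α (.app (.app S.XiT t1) t2) S.bot
end


variable {B : Type} {D : B → Type}

/-- `t ≻ ρ` : the stable relation `≻_ζ` at the closure ordinal (by monotonicity,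
it equals the union of the `≻_α` over all ordinals `α`). -/
def SuccS (S : CanSys B D) (t ρ : Tm S.C) : Prop := ∃ α : Ordinal.{0}, Succ S α t ρ

/-- `t ∼ τ` : the stable typing relation. -/
def SimS (S : CanSys B D) (t : Tm S.C) (τ : ETy B) : Prop := ∃ α : Ordinal.{0}, Sim S α t τ

/-- One-step reduction of the stable reduction system `R`. -/
def StepR (S : CanSys B D) (t t' : Tm S.C) : Prop := ∃ α : Ordinal.{0}, Step S α t t'

/-- `t ↠_R t'` : many-step reduction in the stable reduction system `R`. -/
def StepsR (S : CanSys B D) : Tm S.C → Tm S.C → Prop := Relation.ReflTransGen (StepR S)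

/-- `t ⇝ ρ` : the stable relation `⇝_ζ`. -/
def LeadR (S : CanSys B D) (t ρ : Tm S.C) : Prop :=
  ∃ t', StepsR S t t' ∧ SuccS S t' ρ

/-- `t =_{≤α} t'` : convertibility in `R_α`. -/
def ConvLe (S : CanSys B D) (α : Ordinal.{0}) : Tm S.C → Tm S.C → Prop :=
  Relation.EqvGen (Step S α)

/-- `t =_R t'` : convertibility in the stable reduction system `R`. -/
def ConvR (S : CanSys B D) : Tm S.C → Tm S.C → Prop :=
  Relation.EqvGen (StepR S)

/-- Filling the boxes `□₁, …, □ₖ` of a `k`-ary context (a λ-term over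
`Σ⁺ ∪ {□₁, …, □ₖ}`) with terms, in such a way that the free variables of the
inserted terms do not become bound. -/
def fillk {C : Type} {k : Nat} (ts : Fin k → Tm C) : Tm (Fin k ⊕ C) → Tm C
  | .var n => .var n
  | .const (.inl i) => ts i
  | .const (.inr c) => .const c
  | .app a b => .app (fillk ts a) (fillk ts b)
  | .lam a => .lam (fillk (fun i => (ts i).lift) a)

/-- Filling a unary context. -/
def fill1 {C : Type} (Ctx : Tm (Fin 1 ⊕ C)) (t : Tm C) : Tm C :=
  fillk (fun _ => t) Ctx

/-- `t ≫^n t'` (at the stable level): there are a `k`-ary context `Cx`, terms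
`t₁, …, t_k` and canonical terms `ρ₁, …, ρ_k` of ranks `≤ n` with `tᵢ ≻ ρᵢ`,
`t = Cx[t₁,…,t_k]` and `t' = Cx[ρ₁,…,ρ_k]`. -/
def Gg (S : CanSys B D) (n : Nat) (t t' : Tm S.C) : Prop :=
  ∃ (k : Nat) (Cx : Tm (Fin k ⊕ S.C)) (ts ρs : Fin k → Tm S.C),
    (∀ i, SuccS S (ts i) (ρs i)) ∧
    (∀ i, ∃ τ : ETy B, τ ≠ .omega ∧ ρs i ∈ S.TT τ ∧ rank τ ≤ n) ∧
    t = fillk ts Cx ∧ t' = fillk ρs Cx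


section TmLemmas
namespace Tm
variable {C : Type}

/-- Occurrence of a free variable. -/
def hasVar : Tm C → Nat → Prop
  | .var m, n => m = n
  | .const _, _ => False
  | .app a b, n => a.hasVar n ∨ b.hasVar n
  | .lam a, n => a.hasVar (n + 1)

theorem rename_rename (f g : Nat → Nat) (t : Tm C) :
    (t.rename f).rename g = t.rename (g ∘ f) := by
  induction t generalizing f g with
  | var n => rfl
  | const c => rfl
  | app a b iha ihb => simp [rename, iha, ihb]
  | lam a ih =>
      simp only [rename, ih]
      congr 1
      apply congrArg (rename · a)
      funext n
      cases n <;> rfl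

theorem rename_ext {f g : Nat → Nat} {t : Tm C} (h : ∀ n, t.hasVar n → f n = g n) :
    t.rename f = t.rename g := by
  induction t generalizing f g with
  | var n => exact congrArg Tm.var (h n rfl)
  | const c => rfl
  | app a b iha ihb =>
      exact congrArg₂ Tm.app (iha fun n hn => h n (Or.inl hn)) (ihb fun n hn => h n (Or.inr hn))
  | lam a ih =>
      refine congrArg Tm.lam (ih fun n hn => ?_)
      cases n with
      | zero => rfl
      | succ m => exact congrArg (· + 1) (h m hn)

theorem rename_id (t : Tm C) : t.rename id = t := by
  induction t with
  | var n => rfl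
  | const c => rfl
  | app a b iha ihb => simp [rename, iha, ihb]
  | lam a ih =>
      simp only [rename]
      refine congrArg Tm.lam ?_
      rw [show (fun n => match n with | 0 => 0 | m + 1 => id m + 1) = (id : Nat → Nat) by
        funext n; cases n <;> rfl, ih]

theorem hasVar_rename {f : Nat → Nat} {t : Tm C} {n : Nat} :
    (t.rename f).hasVar n ↔ ∃ m, t.hasVar m ∧ f m = n := by
  induction t generalizing f n with
  | var k => simp [rename, hasVar]
  | const c => simp [rename, hasVar]
  | app a b iha ihb =>
      simp only [rename, hasVar, iha, ihb]
      constructor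
      · rintro (⟨m, hm, rfl⟩ | ⟨m, hm, rfl⟩) <;> exact ⟨m, by tauto, rfl⟩
      · rintro ⟨m, hm | hm, rfl⟩
        · exact Or.inl ⟨m, hm, rfl⟩
        · exact Or.inr ⟨m, hm, rfl⟩
  | lam a ih =>
      show (a.rename _).hasVar (n + 1) ↔ _
      rw [ih]
      constructor
      · rintro ⟨m, hm, hfm⟩
        match m, hfm with
        | 0, hfm => exact (Nat.succ_ne_zero n (hfm.symm)).elim
        | m + 1, hfm => exact ⟨m, hm, Nat.succ_injective hfm⟩
      · rintro ⟨m, hm, rfl⟩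
        exact ⟨m + 1, hm, rfl⟩

theorem rename_injective {f : Nat → Nat} (hf : Function.Injective f) :
    Function.Injective (Tm.rename (C := C) f) := by
  intro a
  induction a generalizing f with
  | var n => intro b h; cases b <;> simp_all [rename]; exact hf h
  | const c => intro b h; cases b <;> simp_all [rename]
  | app a1 a2 ih1 ih2 =>
      intro b h; cases b <;> simp_all [rename]
      exact ⟨ih1 hf h.1, ih2 hf h.2⟩
  | lam a ih =>
      intro b h; cases b <;> simp_all [rename]
      refine ih (f := fun n => match n with | 0 => 0 | m + 1 => f m + 1) ?_ h
      intro x y hxy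
      cases x <;> cases y <;> simp_all
      exact hf hxy

theorem bind_ext {σ σ' : Nat → Tm C} {t : Tm C} (h : ∀ n, t.hasVar n → σ n = σ' n) :
    t.bind σ = t.bind σ' := by
  induction t generalizing σ σ' with
  | var n => exact h n rfl
  | const c => rfl
  | app a b iha ihb =>
      exact congrArg₂ Tm.app (iha fun n hn => h n (Or.inl hn)) (ihb fun n hn => h n (Or.inr hn))
  | lam a ih =>
      refine congrArg Tm.lam (ih fun n hn => ?_)
      cases n with
      | zero => rfl
      | succ m => exact congrArg Tm.lift (h m hn)

theorem bind_var (t : Tm C) : t.bind Tm.var = t := by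
  induction t with
  | var n => rfl
  | const c => rfl
  | app a b iha ihb => simp [bind, iha, ihb]
  | lam a ih =>
      simp only [bind]
      refine congrArg Tm.lam ?_
      rw [show (fun n => match n with | 0 => Tm.var 0 | m + 1 => (Tm.var (C := C) m).lift)
          = (Tm.var : Nat → Tm C) by funext n; cases n <;> rfl, ih]

theorem bind_rename (f : Nat → Nat) (σ : Nat → Tm C) (t : Tm C) :
    (t.rename f).bind σ = t.bind (σ ∘ f) := by
  induction t generalizing f σ with
  | var n => rfl
  | const c => rfl
  | app a b iha ihb => simp [rename, bind, iha, ihb]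
  | lam a ih =>
      simp only [rename, bind, ih]
      refine congrArg Tm.lam ?_
      apply bind_ext
      intro n _
      cases n <;> rfl

theorem rename_bind (f : Nat → Nat) (σ : Nat → Tm C) (t : Tm C) :
    (t.bind σ).rename f = t.bind (fun n => (σ n).rename f) := by
  induction t generalizing f σ with
  | var n => rfl
  | const c => rfl
  | app a b iha ihb => simp [rename, bind, iha, ihb]
  | lam a ih =>
      simp only [bind, rename, ih]
      refine congrArg Tm.lam ?_
      apply bind_ext
      intro n _
      cases n with
      | zero => rfl
      | succ m =>
          show ((σ m).lift).rename _ = ((σ m).rename f).lift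
          simp only [lift, rename_rename]
          apply rename_ext
          intro k _
          rfl

theorem bind_bind (σ τ : Nat → Tm C) (t : Tm C) :
    (t.bind σ).bind τ = t.bind (fun n => (σ n).bind τ) := by
  induction t generalizing σ τ with
  | var n => rfl
  | const c => rfl
  | app a b iha ihb => simp [bind, iha, ihb]
  | lam a ih =>
      simp only [bind, ih]
      refine congrArg Tm.lam ?_
      apply bind_ext
      intro n _
      cases n with
      | zero => rfl
      | succ m =>
          show ((σ m).lift).bind _ = ((σ m).bind τ).lift
          simp only [lift, bind_rename, rename_bind]
          rfl

theorem rename_eq_bind (f : Nat → Nat) (t : Tm C) :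
    t.rename f = t.bind (fun n => Tm.var (f n)) := by
  induction t generalizing f with
  | var n => rfl
  | const c => rfl
  | app a b iha ihb => simp [rename, bind, iha, ihb]
  | lam a ih =>
      simp only [rename, bind, ih]
      refine congrArg Tm.lam ?_
      apply bind_ext
      intro n _
      cases n <;> rfl

theorem lift_bind (σ : Nat → Tm C) (t : Tm C) :
    t.lift.bind (fun n => match n with | 0 => Tm.var 0 | m + 1 => (σ m).lift)
      = (t.bind σ).lift := by
  simp only [lift, bind_rename, rename_bind]
  rfl

theorem subst0_lift (t s : Tm C) : t.lift.subst0 s = t := by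
  simp only [subst0, lift, bind_rename]
  rw [show ((fun n => match n with | 0 => s | m + 1 => Tm.var m) ∘ (· + 1))
      = (Tm.var : Nat → Tm C) from rfl, bind_var]

theorem bind_subst0 (σ : Nat → Tm C) (a s : Tm C) :
    (a.subst0 s).bind σ
      = (a.bind fun n => match n with | 0 => Tm.var 0 | m + 1 => (σ m).lift).subst0 (s.bind σ) := by
  simp only [subst0, bind_bind]
  apply bind_ext
  intro n _
  cases n with
  | zero => rfl
  | succ m =>
      show σ m = ((σ m).rename (· + 1)).bind _
      rw [bind_rename, show ((fun n => match n with | 0 => s.bind σ | m + 1 => Tm.var m) ∘ (· + 1))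
        = (Tm.var : Nat → Tm C) from rfl, bind_var]

theorem hasVar_bind {σ : Nat → Tm C} {t : Tm C} {n : Nat} (h : (t.bind σ).hasVar n) :
    ∃ m, t.hasVar m ∧ (σ m).hasVar n := by
  induction t generalizing σ n with
  | var k => exact ⟨k, rfl, h⟩
  | const c => exact absurd h (by simp [bind, hasVar])
  | app a b iha ihb =>
      rcases h with h | h
      · obtain ⟨m, hm, h⟩ := iha h; exact ⟨m, Or.inl hm, h⟩
      · obtain ⟨m, hm, h⟩ := ihb h; exact ⟨m, Or.inr hm, h⟩
  | lam a ih =>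
      obtain ⟨m, hm, h⟩ := ih h
      cases m with
      | zero => exact absurd h (by simp [hasVar])
      | succ k =>
          obtain ⟨j, hj, hjn⟩ := hasVar_rename.1 h
          obtain rfl : j = n := Nat.succ_injective hjn
          exact ⟨k, hm, hj⟩

/-- A bound above all free variables. -/
def maxV : Tm C → Nat
  | .var n => n + 1
  | .const _ => 0
  | .app a b => max a.maxV b.maxV
  | .lam a => a.maxV

theorem hasVar_lt_maxV {t : Tm C} {n : Nat} (h : t.hasVar n) : n < t.maxV := by
  induction t generalizing n with
  | var k =>
      simp only [hasVar] at h
      subst h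
      exact Nat.lt_succ_self _
  | const c => exact absurd h (by simp [hasVar])
  | app a b iha ihb =>
      rcases h with h | h
      · exact lt_of_lt_of_le (iha h) (le_max_left _ _)
      · exact lt_of_lt_of_le (ihb h) (le_max_right _ _)
  | lam a ih => exact lt_of_le_of_lt (Nat.le_succ n) (ih h)

theorem lift_injective : Function.Injective (Tm.lift (C := C)) :=
  rename_injective fun _ _ h => Nat.succ_injective h

/-- Terms without free `var 0` are lifts. -/
theorem exists_unlift {t : Tm C} (h : ¬ t.hasVar 0) : ∃ s : Tm C, t = s.lift := by
  refine ⟨t.rename (· - 1), ?_⟩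
  simp only [lift, rename_rename]
  conv_lhs => rw [show t = t.rename id from (rename_id t).symm]
  apply rename_ext
  intro n hn
  cases n with
  | zero => exact absurd hn h
  | succ m => rfl

end Tm
end TmLemmas

section TTLemmas

theorem Tm.hasVar_bind_of {C : Type} {σ : Nat → Tm C} {t : Tm C} {m n : Nat}
    (ht : t.hasVar m) (hσ : (σ m).hasVar n) : (t.bind σ).hasVar n := by
  induction t generalizing σ m n with
  | var k => cases ht; exact hσ
  | const c => exact absurd ht (by simp [Tm.hasVar])
  | app a b iha ihb =>
      rcases ht with ht | ht
      · exact Or.inl (iha ht hσ)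
      · exact Or.inr (ihb ht hσ)
  | lam a ih =>
      show (a.bind _).hasVar (n + 1)
      refine ih (m := m + 1) ht ?_
      show ((σ m).rename (· + 1)).hasVar (n + 1)
      exact Tm.hasVar_rename.2 ⟨n, hσ, rfl⟩

theorem IsT1.ne_omega {B : Type} {τ : ETy B} (h : IsT1 τ) : τ ≠ .omega := by
  cases h <;> simp

theorem IsT1.ne_eps {B : Type} {τ : ETy B} (h : IsT1 τ) : τ ≠ .eps := by
  cases h <;> simp

namespace CanSys

variable {B : Type} {D : B → Type} (S : CanSys B D)

theorem mem_TT_isT1 {τ : ETy B} (hτ : τ ≠ .omega) {t : Tm S.C} (ht : t ∈ S.TT τ) :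
    IsT1 τ := by
  by_contra h
  rw [S.TT_invalid τ h hτ] at ht
  exact ht

theorem TT_noVar {τ : ETy B} (hτ1 : IsT1 τ) :
    ∀ t ∈ S.TT τ, ∀ n, ¬ t.hasVar n := by
  induction hτ1 with
  | o =>
      intro t ht n
      obtain ⟨c, rfl⟩ := S.TT_const .o .o (by intro τ2 h; cases h) t ht
      simp [Tm.hasVar]
  | base b =>
      intro t ht n
      obtain ⟨c, rfl⟩ := S.TT_const _ (.base b) (by intro τ2 h; cases h) t ht
      simp [Tm.hasVar]
  | arr h1 h2 ih1 ih2 =>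
      intro t ht n
      obtain ⟨c, rfl⟩ := S.TT_const _ (.arr h1 h2)
        (by intro τ2 h; injection h with e1 e2; exact h1.ne_omega e1) t ht
      simp [Tm.hasVar]
  | omegaArr h2 ih2 =>
      intro t ht n
      rw [S.TT_omega_arr _ h2] at ht
      obtain ⟨ρ, hρ, rfl⟩ := ht
      exact ih2 ρ hρ (n + 1)

theorem TT_bind {τ : ETy B} (hτ : τ ≠ .omega) {t : Tm S.C} (ht : t ∈ S.TT τ)
    (σ : Nat → Tm S.C) : t.bind σ = t := by
  have h := S.TT_noVar (S.mem_TT_isT1 hτ ht) t ht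
  calc t.bind σ = t.bind Tm.var := Tm.bind_ext fun n hn => absurd hn (h n)
  _ = t := Tm.bind_var t

theorem TT_rename {τ : ETy B} (hτ : τ ≠ .omega) {t : Tm S.C} (ht : t ∈ S.TT τ)
    (f : Nat → Nat) : t.rename f = t := by
  rw [Tm.rename_eq_bind]
  exact S.TT_bind hτ ht _

theorem TT_shape {τ : ETy B} (hτ : τ ≠ .omega) {t : Tm S.C} (ht : t ∈ S.TT τ) :
    (∃ c, t = .const c) ∨ (∃ b, t = .lam b) := by
  have h1 := S.mem_TT_isT1 hτ ht
  induction h1 with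
  | o => exact Or.inl (S.TT_const .o .o (by intro τ2 h; cases h) t ht)
  | base b => exact Or.inl (S.TT_const _ (.base b) (by intro τ2 h; cases h) t ht)
  | arr h1 h2 =>
      exact Or.inl (S.TT_const _ (.arr h1 h2)
        (by intro τ2 h; injection h with e1 e2; exact h1.ne_omega e1) t ht)
  | omegaArr h2 =>
      rw [S.TT_omega_arr _ h2] at ht
      obtain ⟨ρ, hρ, rfl⟩ := ht
      exact Or.inr ⟨ρ, rfl⟩

theorem TT_nonempty {τ : ETy B} (hτ1 : IsT1 τ) (hD : ∀ b, Nonempty (D b)) :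
    (S.TT τ).Nonempty := by
  induction hτ1 with
  | o => exact ⟨S.top, by rw [S.TT_o]; exact Or.inl rfl⟩
  | base b =>
      obtain ⟨e⟩ := S.TT_base_equiv b
      obtain ⟨d⟩ := hD b
      exact ⟨e d, (e d).2⟩
  | arr h1 h2 ih1 ih2 =>
      obtain ⟨ρ2, hρ2⟩ := ih2
      obtain ⟨ρ, hρ, _⟩ := S.F_full _ _ (.arr h1 h2) h1.ne_omega (fun _ => ρ2) (fun _ _ => hρ2)
      exact ⟨ρ, hρ⟩
  | omegaArr h2 ih2 =>
      obtain ⟨ρ2, hρ2⟩ := ih2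
      exact ⟨.lam ρ2, by rw [S.TT_omega_arr _ h2]; exact ⟨ρ2, hρ2, rfl⟩⟩

theorem top_mem : S.top ∈ S.TT .o := by rw [S.TT_o]; exact Or.inl rfl
theorem bot_mem : S.bot ∈ S.TT .o := by rw [S.TT_o]; exact Or.inr rfl

theorem mem_arr_isT1 {τ1 τ2 : ETy B} {t : Tm S.C} (ht : t ∈ S.TT (.arr τ1 τ2)) :
    IsT1 (.arr τ1 τ2) := S.mem_TT_isT1 (by simp) ht

/-- `F(ρ)(t1)` is canonical, hence closed. -/
theorem F_closed {τ1 τ2 : ETy B} {ρ : Tm S.C} (hρ : ρ ∈ S.TT (.arr τ1 τ2))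
    {t1 : Tm S.C} (ht1 : t1 ∈ S.TT τ1) : S.F τ1 τ2 ρ t1 ∈ S.TT τ2 :=
  S.F_mapsto τ1 τ2 (S.mem_arr_isT1 hρ) ρ hρ t1 ht1

theorem isT1_of_arr_mem {τ1 τ2 : ETy B} {t : Tm S.C} (ht : t ∈ S.TT (.arr τ1 τ2)) :
    IsT1 τ2 := by
  cases S.mem_arr_isT1 ht with
  | arr h1 h2 => exact h2
  | omegaArr h2 => exact h2

/- combinator computations -/

theorem Hterm_bind (σ : Nat → Tm S.C) : S.Hterm.bind σ = S.Hterm := rfl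

theorem bind_Kt (t : Tm S.C) (σ : Nat → Tm S.C) : (S.Kt t).bind σ = S.Kt (t.bind σ) :=
  congrArg Tm.lam (Tm.lift_bind σ t)

theorem bind_Ht (t : Tm S.C) (σ : Nat → Tm S.C) : (S.Ht t).bind σ = S.Ht (t.bind σ) :=
  congrArg (Tm.app S.LT) (S.bind_Kt t σ)

end CanSys

theorem Tm.bind_sigma2_lift {C : Type} (t : Tm C) :
    t.lift.bind (fun n => match n with
      | 0 => Tm.app (.var 1) (.var 0) | m + 1 => Tm.var (m + 2)) = t.lift.lift := by
  show (t.rename (· + 1)).bind _ = ((t.rename (· + 1)).rename (· + 1))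
  rw [Tm.bind_rename, Tm.rename_rename, Tm.rename_eq_bind]
  apply Tm.bind_ext
  intro n _
  rfl

namespace CanSys
variable {B : Type} {D : B → Type} (S : CanSys B D)

theorem Ft_eta (x w : Tm S.C) :
    S.Ft x (Tm.lam (.app w.lift (.var 0))) =
      Tm.lam (.app (.app S.XiT x.lift)
        (.lam (.app w.lift.lift (.app (.var 1) (.var 0))))) := by
  show Tm.lam (.app (.app S.XiT x.lift) (.lam (.app (w.lift.bind _) (.app (.var 1) (.var 0))))) = _
  rw [Tm.bind_sigma2_lift]

theorem Ft_default (t1 t2 : Tm S.C)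
    (h : S.Ft t1 t2 = Tm.lam (.app (.app S.XiT t1.lift)
        (.lam (.app t2.lift.lift (.app (.var 1) (.var 0)))))) (σ : Nat → Tm S.C) :
    (S.Ft t1 t2).bind σ = S.Ft (t1.bind σ) (Tm.lam (.app (t2.bind σ).lift (.var 0))) := by
  rw [h, Ft_eta]
  show Tm.lam (.app (.app S.XiT (t1.lift.bind _))
      (.lam (.app (t2.lift.lift.bind _) (.app (.var 1) (.var 0))))) = _
  rw [Tm.lift_bind, Tm.lift_bind, Tm.lift_bind]

theorem bind_Ft_lam (t1 b : Tm S.C) (σ : Nat → Tm S.C) :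
    (S.Ft t1 (.lam b)).bind σ = S.Ft (t1.bind σ) ((Tm.lam b).bind σ) := by
  have key : (b.bind (fun n => match n with
        | 0 => Tm.app (.var 1) (.var 0) | m + 1 => Tm.var (m + 2))).bind
        (fun n => match n with
          | 0 => Tm.var 0
          | m + 1 => ((fun n => match n with | 0 => Tm.var 0 | m + 1 => (σ m).lift) m).lift)
      = (b.bind (fun n => match n with | 0 => Tm.var 0 | m + 1 => (σ m).lift)).bind
        (fun n => match n with
          | 0 => Tm.app (.var 1) (.var 0) | m + 1 => Tm.var (m + 2)) := by
    rw [Tm.bind_bind, Tm.bind_bind]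
    apply Tm.bind_ext
    intro n _
    cases n with
    | zero => rfl
    | succ m =>
        show ((σ m).lift).lift = ((σ m).rename (· + 1)).bind _
        rw [Tm.bind_rename]
        show ((σ m).rename (· + 1)).rename (· + 1) = _
        rw [Tm.rename_rename, Tm.rename_eq_bind]
        apply Tm.bind_ext
        intro n _
        rfl
  show Tm.lam (.app (.app S.XiT (t1.lift.bind _)) (.lam _))
      = Tm.lam (.app (.app S.XiT (t1.bind σ).lift) (.lam _))
  rw [Tm.lift_bind, key]

theorem bind_Ft_const (t1 : Tm S.C) (c : S.C) (σ : Nat → Tm S.C) :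
    (S.Ft t1 (.const c)).bind σ = S.Ft (t1.bind σ) (.const c) := by
  show Tm.lam (.app (.app S.XiT (t1.lift.bind _)) _) = _
  rw [Tm.lift_bind]
  rfl

theorem bind_Ft (t1 t2 : Tm S.C) (σ : Nat → Tm S.C) :
    ∃ v : Tm S.C, (S.Ft t1 t2).bind σ = S.Ft (t1.bind σ) v ∧
      (v = t2.bind σ ∨ v = Tm.lam (.app (t2.bind σ).lift (.var 0))) ∧
      (∀ b, t2 = .lam b → v = t2.bind σ) ∧
      (∀ c, t2 = .const c → v = t2.bind σ) := by
  cases t2 with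
  | lam b =>
      exact ⟨(Tm.lam b).bind σ, S.bind_Ft_lam t1 b σ, Or.inl rfl,
        fun _ _ => rfl, fun _ h => (nomatch h)⟩
  | const c =>
      exact ⟨Tm.const c, S.bind_Ft_const t1 c σ, Or.inl rfl,
        fun _ h => (nomatch h), fun _ _ => rfl⟩
  | var k =>
      exact ⟨Tm.lam (.app ((Tm.var k).bind σ).lift (.var 0)),
        S.Ft_default t1 (.var k) rfl σ, Or.inr rfl,
        fun _ h => (nomatch h), fun _ h => (nomatch h)⟩
  | app a b =>
      exact ⟨Tm.lam (.app ((Tm.app a b).bind σ).lift (.var 0)),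
        S.Ft_default t1 (.app a b) rfl σ, Or.inr rfl,
        fun _ h => (nomatch h), fun _ h => (nomatch h)⟩

end CanSys
end TTLemmas

section Part3
variable {B : Type} {D : B → Type} {S : CanSys B D}

theorem steps_to_rtg {α : Ordinal.{0}} {t u : Tm S.C} (h : Steps S α t u) :
    Relation.ReflTransGen (Step S α) t u := by
  refine Steps.rec (S := S)
    (motive_1 := fun _ _ _ _ => True)
    (motive_2 := fun α t u _ => Relation.ReflTransGen (Step S α) t u)
    (motive_3 := fun _ _ _ _ => True) (motive_4 := fun _ _ _ _ => True)
    (motive_5 := fun _ _ _ _ => True) (motive_6 := fun _ _ _ _ => True)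
    ?_ ?_ ?_ ?_ ?_ ?_ ?_ ?_ ?_ ?_ ?_ ?_ ?_ ?_ ?_ ?_ ?_ ?_ ?_ ?_ ?_ ?_ ?_ ?_ ?_ ?_ ?_ ?_ h
    <;> intros <;>
    first
      | trivial
      | exact Relation.ReflTransGen.refl
      | exact Relation.ReflTransGen.tail (by assumption) (by assumption)

theorem rtg_to_steps {α : Ordinal.{0}} {t u : Tm S.C}
    (h : Relation.ReflTransGen (Step S α) t u) : Steps S α t u := by
  induction h with
  | refl => exact .refl _ _
  | tail _ hs ih => exact .tail ih hs

theorem steps_trans {α : Ordinal.{0}} {t u v : Tm S.C}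
    (h1 : Steps S α t u) (h2 : Steps S α u v) : Steps S α t v :=
  rtg_to_steps ((steps_to_rtg h1).trans (steps_to_rtg h2))

theorem steps_head {α : Ordinal.{0}} {t u v : Tm S.C}
    (h1 : Step S α t u) (h2 : Steps S α u v) : Steps S α t v :=
  rtg_to_steps ((steps_to_rtg h2).head h1)

theorem steps_one {α : Ordinal.{0}} {t u : Tm S.C} (h : Step S α t u) : Steps S α t u :=
  .tail (.refl _ _) h

theorem step_mono {α α' : Ordinal.{0}} (hle : α ≤ α') :
    ∀ {t u : Tm S.C}, Step S α t u → Step S α' t u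
  | _, _, .beta _ t s => .beta _ t s
  | _, _, .eta _ t => .eta _ t
  | _, _, .crule hγ h1 hc hρ1 hs => .crule (lt_of_lt_of_le hγ hle) h1 hc hρ1 hs
  | _, _, .appL s h => .appL s (step_mono hle h)
  | _, _, .appR t h => .appR t (step_mono hle h)
  | _, _, .lam h => .lam (step_mono hle h)

theorem steps_mono {α α' : Ordinal.{0}} (hle : α ≤ α') {t u : Tm S.C}
    (h : Steps S α t u) : Steps S α' t u :=
  rtg_to_steps (Relation.ReflTransGen.mono (fun _ _ hs => step_mono hle hs) _ _ (steps_to_rtg h))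

theorem leadLt_mono {α α' : Ordinal.{0}} (hle : α ≤ α') {t ρ : Tm S.C}
    (h : LeadLt S α t ρ) : LeadLt S α' t ρ := by
  cases h with
  | mk hγ hl => exact .mk (lt_of_lt_of_le hγ hle) hl

theorem sim_mono {α α' : Ordinal.{0}} (hle : α ≤ α') {t : Tm S.C} {τ : ETy B}
    (h : Sim S α t τ) : Sim S α' t τ := by
  cases h with
  | ofA => exact .ofA _ _
  | ofH => exact .ofH _
  | ofKom h => exact .ofKom (leadLt_mono hle h)
  | ofKeps h => exact .ofKeps (leadLt_mono hle h)
  | ofF h1 h2 s1 s2 => exact .ofF (lt_of_lt_of_le h1 hle) (lt_of_lt_of_le h2 hle) s1 s2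
  | ofFom hγ s1 => exact .ofFom (lt_of_lt_of_le hγ hle) s1

theorem succ_mono {α α' : Ordinal.{0}} (hle : α ≤ α') {t ρ : Tm S.C}
    (h : Succ S α t ρ) : Succ S α' t ρ := by
  cases h with
  | refl hτ hρ => exact .refl hτ hρ _
  | fn hρ h => exact .fn hρ (fun t1 ht1 => leadLt_mono hle (h t1 ht1))
  | topLA => exact .topLA _ _
  | topLH => exact .topLH _
  | topA hc => exact .topA hc _
  | topH hc => exact .topH hc _
  | xiTop hα h1 h2 =>
      exact .xiTop (lt_of_lt_of_le hα hle) (sim_mono hle h1)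
        (fun t3 ht3 => leadLt_mono hle (h2 t3 ht3))
  | xiHTop hα h1 h2 =>
      exact .xiHTop (lt_of_lt_of_le hα hle) (sim_mono hle h1)
        (fun t3 ht3 => leadLt_mono hle (h2 t3 ht3))
  | flTopEps hα h1 => exact .flTopEps (lt_of_lt_of_le hα hle) (sim_mono hle h1)
  | flTop hα hτ h1 h2 =>
      exact .flTop (lt_of_lt_of_le hα hle) hτ (sim_mono hle h1) (leadLt_mono hle h2)
  | hiTop hα h => exact .hiTop (lt_of_lt_of_le hα hle) (leadLt_mono hle h)
  | xiBot hα hγ hH h1 h3 hb =>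
      exact .xiBot (lt_of_lt_of_le hα hle) (lt_of_lt_of_le hγ hle) hH (sim_mono hle h1) h3
        (leadLt_mono hle hb)

theorem lead_mono {α α' : Ordinal.{0}} (hle : α ≤ α') {t ρ : Tm S.C}
    (h : Lead S α t ρ) : Lead S α' t ρ := by
  cases h with
  | mk hst hsu => exact .mk (steps_mono hle hst) (succ_mono hle hsu)

/-- The target of `≻` is a canonical term. -/
theorem succ_canonical {α : Ordinal.{0}} {t ρ : Tm S.C} (h : Succ S α t ρ) :
    ∃ τ : ETy B, IsT1 τ ∧ ρ ∈ S.TT τ := by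
  cases h with
  | refl hτ hρ => exact ⟨_, S.mem_TT_isT1 hτ hρ, hρ⟩
  | fn hρ _ => exact ⟨_, S.mem_arr_isT1 hρ, hρ⟩
  | xiBot => exact ⟨.o, .o, S.bot_mem⟩
  | _ => exact ⟨.o, .o, S.top_mem⟩

theorem succ_noVar {α : Ordinal.{0}} {t ρ : Tm S.C} (h : Succ S α t ρ) (n : Nat) :
    ¬ ρ.hasVar n := by
  obtain ⟨τ, hτ, hρ⟩ := succ_canonical h
  exact S.TT_noVar hτ ρ hρ n

theorem step_fv {α : Ordinal.{0}} :
    ∀ {t u : Tm S.C}, Step S α t u → ∀ n, u.hasVar n → t.hasVar n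
  | _, _, .beta _ a s, n, h => by
      obtain ⟨m, hm, hv⟩ := Tm.hasVar_bind h
      cases m with
      | zero => exact Or.inr hv
      | succ k =>
          cases hv
          exact Or.inl hm
  | _, _, .eta _ t, n, h => Or.inl (Tm.hasVar_rename.2 ⟨n, h, rfl⟩)
  | _, _, .crule hγ h1 hc hρ1 hs, n, h => by
      have := S.TT_noVar (S.isT1_of_arr_mem hc) _ (S.F_closed hc hρ1) n
      exact absurd h this
  | _, _, .appL s hstep, n, h => by
      rcases h with h | h
      · exact Or.inl (step_fv hstep n h)
      · exact Or.inr h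
  | _, _, .appR t hstep, n, h => by
      rcases h with h | h
      · exact Or.inl h
      · exact Or.inr (step_fv hstep n h)
  | _, _, .lam hstep, n, h => step_fv hstep (n + 1) h

theorem steps_fv {α : Ordinal.{0}} {t u : Tm S.C} (h : Steps S α t u) (n : Nat)
    (hv : u.hasVar n) : t.hasVar n := by
  have hr := steps_to_rtg h
  clear h
  revert hv
  induction hr with
  | refl => exact fun hv => hv
  | tail _ hs ih => exact fun hv => ih (step_fv hs n hv)

end Part3

section Part4
variable {B : Type} {D : B → Type} {S : CanSys B D}

theorem sim_shape {α : Ordinal.{0}} {t : Tm S.C} {τ : ETy B} (h : Sim S α t τ) :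
    (∃ c, t = Tm.const c) ∨ (∃ b, t = Tm.lam b) := by
  cases h with
  | ofA => exact Or.inl ⟨_, rfl⟩
  | ofH => exact Or.inr ⟨_, rfl⟩
  | ofKom _ => exact Or.inr ⟨_, rfl⟩
  | ofKeps _ => exact Or.inr ⟨_, rfl⟩
  | ofF _ _ _ _ => exact Or.inr ⟨_, rfl⟩
  | ofFom _ _ => exact Or.inr ⟨_, rfl⟩

/-- Bundle of substitution-weakening statements at level `α`. -/
structure BW (S : CanSys B D) (α : Ordinal.{0}) : Prop where
  step : ∀ {t u : Tm S.C}, Step S α t u → ∀ σ, Step S α (t.bind σ) (u.bind σ)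
  steps : ∀ {t u : Tm S.C}, Steps S α t u → ∀ σ, Steps S α (t.bind σ) (u.bind σ)
  lead : ∀ {t ρ : Tm S.C}, Lead S α t ρ → ∀ σ, Lead S α (t.bind σ) ρ
  leadLt : ∀ {t ρ : Tm S.C}, LeadLt S α t ρ → ∀ σ, LeadLt S α (t.bind σ) ρ
  sim : ∀ {t : Tm S.C} {τ : ETy B}, Sim S α t τ → ∀ σ, Sim S α (t.bind σ) τ
  succ : ∀ {t ρ : Tm S.C}, Succ S α t ρ → ∀ σ, Succ S α (t.bind σ) ρ

variable {α : Ordinal.{0}}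

theorem leadLt_bind (hIH : ∀ γ < α, BW S γ) {t ρ : Tm S.C}
    (h : LeadLt S α t ρ) (σ : Nat → Tm S.C) : LeadLt S α (t.bind σ) ρ := by
  cases h with
  | mk hγ hl => exact .mk hγ ((hIH _ hγ).lead hl σ)

theorem sim_bind (hIH : ∀ γ < α, BW S γ) {t : Tm S.C} {τ : ETy B}
    (h : Sim S α t τ) (σ : Nat → Tm S.C) : Sim S α (t.bind σ) τ := by
  cases h with
  | ofA => exact .ofA _ _
  | ofH => exact .ofH _
  | ofKom h => rw [S.bind_Kt]; exact .ofKom (leadLt_bind hIH h σ)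
  | ofKeps h => rw [S.bind_Kt]; exact .ofKeps (leadLt_bind hIH h σ)
  | ofF h1 h2 s1 s2 =>
      rcases sim_shape s2 with ⟨c, rfl⟩ | ⟨b, rfl⟩
      · rw [S.bind_Ft_const]
        exact .ofF h1 h2 ((hIH _ h1).sim s1 σ) s2
      · rw [S.bind_Ft_lam]
        exact .ofF h1 h2 ((hIH _ h1).sim s1 σ) ((hIH _ h2).sim s2 σ)
  | ofFom hγ s1 =>
      obtain ⟨v, hv, -, -, -⟩ := S.bind_Ft _ _ σ
      rw [hv]
      exact .ofFom hγ ((hIH _ hγ).sim s1 σ)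

theorem succ_bind (hIH : ∀ γ < α, BW S γ) {t ρ : Tm S.C}
    (h : Succ S α t ρ) (σ : Nat → Tm S.C) : Succ S α (t.bind σ) ρ := by
  classical
  cases h with
  | refl hτ hρ => rw [S.TT_bind hτ hρ σ]; exact .refl hτ hρ _
  | @fn τ1 τ2 ρ hρ α t h =>
      have hT1 := S.mem_arr_isT1 hρ
      by_cases hω : τ1 = .omega
      · subst hω
        have hT2 : IsT1 τ2 := S.isT1_of_arr_mem hρ
        rw [S.TT_omega_arr _ hT2] at hρ
        obtain ⟨ρ2, hρ2, rfl⟩ := hρ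
        have hρ' : Tm.lam ρ2 ∈ S.TT (.arr .omega τ2) := by
          rw [S.TT_omega_arr _ hT2]; exact ⟨ρ2, hρ2, rfl⟩
        refine .fn hρ' (fun u _ => ?_)
        rw [S.F_omega τ2 ρ2 hρ2 u]
        have h1 := h (.var t.maxV) (by rw [S.TT_omega]; exact Set.mem_univ _)
        rw [S.F_omega τ2 ρ2 hρ2 (.var t.maxV)] at h1
        have h2 := leadLt_bind hIH h1 (Function.update σ t.maxV u)
        have e : (Tm.app t (Tm.var t.maxV)).bind (Function.update σ t.maxV u)
            = Tm.app (t.bind σ) u := by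
          show Tm.app (t.bind _) (Function.update σ t.maxV u t.maxV) = _
          rw [Function.update_self]
          congr 1
          exact Tm.bind_ext fun n hn =>
            Function.update_of_ne (Nat.ne_of_lt (Tm.hasVar_lt_maxV hn)) _ _
        rwa [e] at h2
      · refine .fn hρ (fun t1 ht1 => ?_)
        have h2 := leadLt_bind hIH (h t1 ht1) σ
        have e : (Tm.app t t1).bind σ = Tm.app (t.bind σ) t1 := by
          show Tm.app _ (t1.bind σ) = _
          rw [S.TT_bind hω ht1 σ]
        rwa [e] at h2
  | topLA => exact .topLA _ _
  | topLH => exact .topLH _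
  | @topA b c hc =>
      have e : (Tm.app (S.AT b) c).bind σ = Tm.app (S.AT b) c := by
        show Tm.app (S.AT b) (c.bind σ) = _
        rw [S.TT_bind (by simp) hc σ]
      rw [e]
      exact .topA hc _
  | topH hc =>
      have hco : _ ∈ S.TT ETy.o := hc.elim (fun h => h ▸ S.top_mem) (fun h => h ▸ S.bot_mem)
      rw [S.bind_Ht, S.TT_bind (by simp) hco σ]
      exact .topH hc _
  | @xiTop _ hα t1 t2 τ h1 h2 =>
      refine .xiTop hα (sim_bind hIH h1 σ) (fun t3 ht3 => ?_)
      by_cases hω : τ = .omega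
      · subst hω
        have hl := h2 (.var t2.maxV) (by rw [S.TT_omega]; exact Set.mem_univ _)
        have h3 := leadLt_bind hIH hl (Function.update σ t2.maxV t3)
        have e : (Tm.app t2 (Tm.var t2.maxV)).bind (Function.update σ t2.maxV t3)
            = Tm.app (t2.bind σ) t3 := by
          show Tm.app (t2.bind _) (Function.update σ t2.maxV t3 t2.maxV) = _
          rw [Function.update_self]
          congr 1
          exact Tm.bind_ext fun n hn =>
            Function.update_of_ne (Nat.ne_of_lt (Tm.hasVar_lt_maxV hn)) _ _
        rwa [e] at h3
      · have h3 := leadLt_bind hIH (h2 t3 ht3) σ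
        have e : (Tm.app t2 t3).bind σ = Tm.app (t2.bind σ) t3 := by
          show Tm.app _ (t3.bind σ) = _
          rw [S.TT_bind hω ht3 σ]
        rwa [e] at h3
  | @xiHTop _ hα t1 t2 τ h1 h2 =>
      have e0 : (S.Ht (Tm.app (Tm.app S.XiT t1) t2)).bind σ
          = S.Ht (Tm.app (Tm.app S.XiT (t1.bind σ)) (t2.bind σ)) := S.bind_Ht _ σ
      rw [e0]
      refine .xiHTop hα (sim_bind hIH h1 σ) (fun t3 ht3 => ?_)
      by_cases hω : τ = .omega
      · subst hω
        have hl := h2 (.var t2.maxV) (by rw [S.TT_omega]; exact Set.mem_univ _)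
        have h3 := leadLt_bind hIH hl (Function.update σ t2.maxV t3)
        have e : (S.Ht (Tm.app t2 (Tm.var t2.maxV))).bind (Function.update σ t2.maxV t3)
            = S.Ht (Tm.app (t2.bind σ) t3) := by
          rw [S.bind_Ht]
          congr 1
          show Tm.app (t2.bind _) (Function.update σ t2.maxV t3 t2.maxV) = _
          rw [Function.update_self]
          congr 1
          exact Tm.bind_ext fun n hn =>
            Function.update_of_ne (Nat.ne_of_lt (Tm.hasVar_lt_maxV hn)) _ _
        rwa [e] at h3
      · have h3 := leadLt_bind hIH (h2 t3 ht3) σ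
        have e2 : (Tm.app t2 t3).bind σ = Tm.app (t2.bind σ) t3 := by
          show Tm.app _ (t3.bind σ) = _
          rw [S.TT_bind hω ht3 σ]
        have e : (S.Ht (Tm.app t2 t3)).bind σ = S.Ht (Tm.app (t2.bind σ) t3) := by
          rw [S.bind_Ht, e2]
        rwa [e] at h3
  | @flTopEps _ hα t1 t2 h1 =>
      obtain ⟨v, hv, -, -, -⟩ := S.bind_Ft t1 t2 σ
      have e : (Tm.app S.LT (S.Ft t1 t2)).bind σ = Tm.app S.LT (S.Ft (t1.bind σ) v) := by
        show Tm.app S.LT ((S.Ft t1 t2).bind σ) = _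
        rw [hv]
      rw [e]
      exact .flTopEps hα (sim_bind hIH h1 σ)
  | @flTop _ hα t1 t2 τ hτ h1 h2 =>
      obtain ⟨v, hv, hvor, -, -⟩ := S.bind_Ft t1 t2 σ
      have e : (Tm.app S.LT (S.Ft t1 t2)).bind σ = Tm.app S.LT (S.Ft (t1.bind σ) v) := by
        show Tm.app S.LT ((S.Ft t1 t2).bind σ) = _
        rw [hv]
      rw [e]
      have h2' : LeadLt S α (Tm.app S.LT (t2.bind σ)) S.top := leadLt_bind hIH h2 σ
      have h2v : LeadLt S α (Tm.app S.LT v) S.top := by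
        rcases hvor with rfl | rfl
        · exact h2'
        · cases h2' with
          | mk hγ hl =>
            cases hl with
            | mk st su =>
              exact .mk hγ (.mk (steps_head (.appR S.LT (.eta _ (t2.bind σ))) st) su)
      exact .flTop hα hτ (sim_bind hIH h1 σ) h2v
  | hiTop hα h =>
      rw [S.bind_Ht]
      exact .hiTop hα (leadLt_bind hIH h σ)
  | @xiBot _ hα t1 t2 τ γ hγ hH h1 t3 h3 hb =>
      have hH' := (hIH γ hγ).succ hH σ
      rw [S.bind_Ht] at hH'
      by_cases hω : τ = .omega
      · subst hω
        have hb' := leadLt_bind hIH hb σ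
        exact .xiBot hα hγ hH' (sim_bind hIH h1 σ)
          (by rw [S.TT_omega]; exact Set.mem_univ (t3.bind σ)) hb'
      · have hb' := leadLt_bind hIH hb σ
        have e : (Tm.app t2 t3).bind σ = Tm.app (t2.bind σ) t3 := by
          show Tm.app _ (t3.bind σ) = _
          rw [S.TT_bind hω h3 σ]
        rw [e] at hb'
        exact .xiBot hα hγ hH' (sim_bind hIH h1 σ) h3 hb'

theorem step_bind (hIH : ∀ γ < α, BW S γ) :
    ∀ {t u : Tm S.C}, Step S α t u → ∀ σ, Step S α (t.bind σ) (u.bind σ)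
  | _, _, .beta _ a s, σ => by
      rw [Tm.bind_subst0]
      exact .beta _ _ _
  | _, _, .eta _ t, σ => by
      show Step S α (Tm.lam (.app (t.lift.bind _) (.var 0))) (t.bind σ)
      rw [Tm.lift_bind]
      exact .eta _ _
  | _, _, .crule (τ1 := τ1) (τ2 := τ2) (c := c) (ρ1 := ρ1) (t := t) hγ h1 hc hρ1 hs, σ => by
      show Step S α (Tm.app (c.bind σ) (t.bind σ)) ((S.F τ1 τ2 c ρ1).bind σ)
      rw [S.TT_bind (show ETy.arr τ1 τ2 ≠ ETy.omega by simp) hc σ,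
        S.TT_bind (S.isT1_of_arr_mem hc).ne_omega (S.F_closed hc hρ1) σ]
      exact .crule hγ h1 hc hρ1 ((hIH _ hγ).succ hs σ)
  | _, _, .appL s h, σ => .appL _ (step_bind hIH h σ)
  | _, _, .appR t h, σ => .appR _ (step_bind hIH h σ)
  | _, _, .lam h, σ => .lam (step_bind hIH h _)

theorem steps_bind (hIH : ∀ γ < α, BW S γ) {t u : Tm S.C}
    (h : Steps S α t u) (σ : Nat → Tm S.C) : Steps S α (t.bind σ) (u.bind σ) :=
  rtg_to_steps (Relation.ReflTransGen.lift (fun z : Tm S.C => z.bind σ)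
    (fun _ _ hs => step_bind hIH hs σ) _ _ (steps_to_rtg h))

theorem lead_bind (hIH : ∀ γ < α, BW S γ) {t ρ : Tm S.C}
    (h : Lead S α t ρ) (σ : Nat → Tm S.C) : Lead S α (t.bind σ) ρ := by
  cases h with
  | mk hst hsu => exact .mk (steps_bind hIH hst σ) (succ_bind hIH hsu σ)

theorem bw (S : CanSys B D) : ∀ α : Ordinal.{0}, BW S α := by
  intro α
  induction α using Ordinal.induction with
  | _ α IH =>
      exact ⟨fun h σ => step_bind IH h σ, fun h σ => steps_bind IH h σ,
        fun h σ => lead_bind IH h σ, fun h σ => leadLt_bind IH h σ,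
        fun h σ => sim_bind IH h σ, fun h σ => succ_bind IH h σ⟩

theorem step_rename {t u : Tm S.C} (h : Step S α t u) (f : Nat → Nat) :
    Step S α (t.rename f) (u.rename f) := by
  rw [Tm.rename_eq_bind, Tm.rename_eq_bind]
  exact (bw S α).step h _

theorem step_unrename {f : Nat → Nat} (hf : Function.Injective f) {t u : Tm S.C}
    (h : Step S α (t.rename f) u) : ∃ s, Step S α t s ∧ u = s.rename f := by
  classical
  set g : Nat → Nat := fun n => if hn : ∃ m, f m = n then hn.choose else 0 with hgdef
  have hg : ∀ m, g (f m) = m := by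
    intro m
    have hex : ∃ m', f m' = f m := ⟨m, rfl⟩
    have : g (f m) = hex.choose := dif_pos hex
    rw [this]
    exact hf hex.choose_spec
  refine ⟨u.rename g, ?_, ?_⟩
  · have h2 := step_rename h g
    rw [Tm.rename_rename] at h2
    rwa [show (g ∘ f) = id by funext m; exact hg m, Tm.rename_id] at h2
  · rw [Tm.rename_rename]
    conv_lhs => rw [show u = u.rename id from (Tm.rename_id u).symm]
    apply Tm.rename_ext
    intro n hn
    have h3 := step_fv h n hn
    obtain ⟨m, -, rfl⟩ := Tm.hasVar_rename.1 h3
    show f m = f (g (f m))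
    rw [hg]
end Part4

section Part5
variable {B : Type} {D : B → Type} {S : CanSys B D}

theorem arrN_isTp {τ1 τ2 : ETy B} (h1 : IsTp τ1) (h2 : IsTp τ2) : IsTp (arrN τ1 τ2) := by
  have e1 : IsT1 τ1 ∨ τ1 = .omega ∨ τ1 = .eps := h1
  have e2 : IsT1 τ2 ∨ τ2 = .omega ∨ τ2 = .eps := h2
  cases τ2 with
  | omega => cases τ1 <;> exact Or.inr (Or.inl rfl)
  | eps =>
      cases τ1 with
      | eps => exact Or.inr (Or.inl rfl)
      | omega => exact Or.inr (Or.inr rfl)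
      | o => exact Or.inr (Or.inr rfl)
      | base b => exact Or.inr (Or.inr rfl)
      | arr a b => exact Or.inr (Or.inr rfl)
  | o =>
      cases τ1 with
      | eps => exact Or.inr (Or.inl rfl)
      | omega => exact Or.inl (IsT1.omegaArr .o)
      | o => exact Or.inl (IsT1.arr .o .o)
      | base b => exact Or.inl (IsT1.arr (.base b) .o)
      | arr a b =>
          rcases e1 with h | h | h
          · exact Or.inl (IsT1.arr h .o)
          · exact absurd h (by simp)
          · exact absurd h (by simp)
  | base c =>
      cases τ1 with
      | eps => exact Or.inr (Or.inl rfl)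
      | omega => exact Or.inl (IsT1.omegaArr (.base c))
      | o => exact Or.inl (IsT1.arr .o (.base c))
      | base b => exact Or.inl (IsT1.arr (.base b) (.base c))
      | arr a b =>
          rcases e1 with h | h | h
          · exact Or.inl (IsT1.arr h (.base c))
          · exact absurd h (by simp)
          · exact absurd h (by simp)
  | arr c d =>
      have h2' : IsT1 (ETy.arr c d) := by
        rcases e2 with h | h | h
        · exact h
        · exact absurd h (by simp)
        · exact absurd h (by simp)
      cases τ1 with
      | eps => exact Or.inr (Or.inl rfl)
      | omega => exact Or.inl (IsT1.omegaArr h2')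
      | o => exact Or.inl (IsT1.arr .o h2')
      | base b => exact Or.inl (IsT1.arr (.base b) h2')
      | arr a b =>
          rcases e1 with h | h | h
          · exact Or.inl (IsT1.arr h h2')
          · exact absurd h (by simp)
          · exact absurd h (by simp)

theorem sim_isTp : ∀ {α : Ordinal.{0}} {t : Tm S.C} {τ : ETy B}, Sim S α t τ → IsTp τ := by
  intro α
  induction α using Ordinal.induction with
  | _ α IH =>
      intro t τ h
      cases h with
      | ofA => exact Or.inl (.base _)
      | ofH => exact Or.inl .o
      | ofKom _ => exact Or.inr (Or.inl rfl)
      | ofKeps _ => exact Or.inr (Or.inr rfl)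
      | ofF hγ1 hγ2 s1 s2 => exact arrN_isTp (IH _ hγ1 s1) (IH _ hγ2 s2)
      | ofFom _ _ => exact Or.inr (Or.inl rfl)

theorem hasVar_lift_zero (s : Tm S.C) : ¬ (s.lift).hasVar 0 := by
  intro h
  obtain ⟨m, -, hm⟩ := Tm.hasVar_rename.1 h
  exact Nat.succ_ne_zero m hm

theorem step_Ht {α : Ordinal.{0}} {x y : Tm S.C} (h : Step S α x y) :
    Step S α (S.Ht x) (S.Ht y) :=
  .appR _ (.lam (step_rename h (· + 1)))

/-- No step out of a constant. -/
theorem no_step_const {α : Ordinal.{0}} {c : S.C} {u : Tm S.C}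
    (h : Step S α (.const c) u) : False := by
  cases h

theorem steps_Ht_inv {α : Ordinal.{0}} {t u : Tm S.C}
    (h : Steps S α (Tm.app S.LT (Tm.lam t.lift)) u) :
    ∃ s : Tm S.C, u = Tm.app S.LT (Tm.lam s.lift) ∧ Steps S α t s := by
  have hr := steps_to_rtg h
  clear h
  induction hr with
  | refl => exact ⟨t, rfl, .refl _ _⟩
  | tail h1 hs ih =>
      obtain ⟨s, rfl, hts⟩ := ih
      rw [show S.LT = Tm.const S.cL from rfl] at hs
      cases hs with
      | crule hγ h1' hc hρ1 hs' =>
          exact absurd hc (S.prim_notin _ (by simp)).2.1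
      | appL s' h' => exact absurd h' (fun h' => no_step_const h')
      | appR t'' h' =>
          generalize hE : s.lift = sl at h'
          cases h' with
          | eta =>
              exfalso
              rename_i w
              have : (s.lift).hasVar 0 := by
                rw [hE]
                exact Or.inr rfl
              exact hasVar_lift_zero s this
          | lam h'' =>
              subst hE
              have h3 : Step S α (s.rename (· + 1)) _ := h''
              obtain ⟨s2, hstep, rfl⟩ := step_unrename (fun a b hab => by omega) h3
              exact ⟨s2, rfl, hts.tail hstep⟩

theorem Ft_eq_lam_lift {t1 t2 s : Tm S.C} (h : S.Ft t1 t2 = Tm.lam s.lift) :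
    ∃ b, t2 = Tm.lam b ∧ ¬ b.hasVar 0 ∧ s = Tm.app (Tm.app S.XiT t1) t2 := by
  cases t2 with
  | lam b =>
      have h' : Tm.lam (Tm.app (Tm.app S.XiT t1.lift)
          (Tm.lam (b.bind fun n => match n with
            | 0 => Tm.app (.var 1) (.var 0) | m + 1 => Tm.var (m + 2)))) = Tm.lam s.lift := h
      have hbody : Tm.app (Tm.app S.XiT t1.lift)
          (Tm.lam (b.bind fun n => match n with
            | 0 => Tm.app (.var 1) (.var 0) | m + 1 => Tm.var (m + 2))) = s.lift := by
        injection h'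
      by_cases hb0 : b.hasVar 0
      · exfalso
        apply hasVar_lift_zero s
        rw [← hbody]
        refine Or.inr ?_
        show (b.bind _).hasVar 1
        exact Tm.hasVar_bind_of hb0 (Or.inl rfl)
      · refine ⟨b, rfl, hb0, ?_⟩
        apply Tm.lift_injective
        rw [← hbody]
        show _ = Tm.app (Tm.app S.XiT t1.lift) (Tm.lam (b.rename _))
        congr 2
        rw [Tm.rename_eq_bind]
        apply Tm.bind_ext
        intro n hn
        cases n with
        | zero => exact absurd hn hb0
        | succ m => rfl
  | const c =>
      exfalso
      have h' : Tm.lam (Tm.app (Tm.app S.XiT t1.lift)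
          (Tm.lam (Tm.app (Tm.const c).lift.lift (Tm.app (.var 1) (.var 0)))))
          = Tm.lam s.lift := h
      have hbody := h'
      injection hbody with hbody
      apply hasVar_lift_zero s
      rw [← hbody]
      exact Or.inr (Or.inr (Or.inl rfl))
  | var k =>
      exfalso
      have h' : Tm.lam (Tm.app (Tm.app S.XiT t1.lift)
          (Tm.lam (Tm.app (Tm.var k).lift.lift (Tm.app (.var 1) (.var 0)))))
          = Tm.lam s.lift := h
      injection h' with hbody
      apply hasVar_lift_zero s
      rw [← hbody]
      exact Or.inr (Or.inr (Or.inl rfl))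
  | app a b =>
      exfalso
      have h' : Tm.lam (Tm.app (Tm.app S.XiT t1.lift)
          (Tm.lam (Tm.app (Tm.app a b).lift.lift (Tm.app (.var 1) (.var 0)))))
          = Tm.lam s.lift := h
      injection h' with hbody
      apply hasVar_lift_zero s
      rw [← hbody]
      exact Or.inr (Or.inr (Or.inl rfl))

theorem ord_succ_lt_succ {γ α : Ordinal.{0}} (h : γ < α) : γ + 1 < α + 1 := by
  rwa [Ordinal.add_one_eq_succ, Ordinal.add_one_eq_succ, Order.succ_lt_succ_iff]

theorem ord_lt_add_one (α : Ordinal.{0}) : α < α + 1 := by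
  rw [Ordinal.add_one_eq_succ]
  exact Order.lt_succ α

theorem ord_pos_add_one (α : Ordinal.{0}) : 0 < α + 1 :=
  lt_of_lt_of_le zero_lt_one (le_add_self)

end Part5

/-- **Lemma 4.17.**  If `H t ⇝_α ⊤` then `t ⇝_α ⊤` or `t ⇝_{α+1} ⊥`. -/
theorem h_top_lemma {B : Type} [Finite B] {D : B → Type} (hD : ∀ b, Nonempty (D b))
    (S : CanSys B D) (α : Ordinal.{0}) (t : Tm S.C)
    (h : Lead S α (S.Ht t) S.top) :
    Lead S α t S.top ∨ Lead S (α + 1) t S.bot := by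
  classical
  revert t h
  induction α using Ordinal.induction with
  | h α IH =>
  intro t h
  cases h with
  | mk hst hsu =>
  obtain ⟨s, rfl, hts⟩ :=
    steps_Ht_inv (show Steps S α (Tm.app S.LT (Tm.lam t.lift)) _ from hst)
  generalize hρ : S.top = ρv at hsu
  generalize hu : Tm.app S.LT (Tm.lam s.lift) = w at hsu
  cases hsu with
  | refl hτ hρm =>
      subst hu
      rcases S.TT_shape hτ hρm with ⟨c, hc⟩ | ⟨b, hb⟩
      · exact nomatch hc
      · exact nomatch hb
  | fn hρm hfn =>
      subst hρ
      exact absurd hρm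
        (Set.disjoint_left.1
          (S.TT_disj .o (.arr _ _) (by intro hh; cases hh) (by simp) (by simp)) S.top_mem)
  | topLA =>
      exfalso
      injection hu with e1 e2
      exact nomatch e2
  | topLH =>
      exfalso
      injection hu with e1 e2
      have e2' : Tm.lam s.lift = Tm.lam (Tm.app S.LT (Tm.lam (Tm.var 1))) := e2
      injection e2' with e3
      apply hasVar_lift_zero s
      rw [e3]
      exact Or.inr rfl
  | topA hc =>
      exfalso
      injection hu with e1 e2
      have e1' : Tm.const S.cL = Tm.const (S.cA _) := e1
      injection e1' with e0
      exact S.hLA _ e0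
  | topH hc =>
      injection hu with e1 e2
      have e2' : Tm.lam s.lift = Tm.lam (Tm.lift _) := e2
      injection e2' with e3
      obtain rfl := Tm.lift_injective (C := S.C) e3
      rcases hc with rfl | rfl
      · exact Or.inl (.mk hts (.refl (by simp) S.top_mem _))
      · exact Or.inr (.mk (steps_mono (le_self_add) hts)
          (.refl (by simp) S.bot_mem _))
  | xiTop hα h1 h2 =>
      exfalso
      injection hu with e1 e2
      exact nomatch e1
  | @xiHTop _ hα t1 t2 τ h1 h2 =>
      injection hu with e1 e2
      have e2' : Tm.lam s.lift = Tm.lam (Tm.lift (Tm.app (Tm.app S.XiT t1) t2)) := e2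
      injection e2' with e3
      obtain rfl := Tm.lift_injective (C := S.C) e3
      by_cases hall : ∀ t3 ∈ S.TT τ, LeadLt S α (Tm.app t2 t3) S.top
      · exact Or.inl (.mk hts (.xiTop hα h1 hall))
      · push_neg at hall
        obtain ⟨t3, ht3, hnot⟩ := hall
        cases h2 t3 ht3 with
        | mk hγ hlead =>
        rcases IH _ hγ (Tm.app t2 t3) hlead with htop | hbot
        · exact absurd (LeadLt.mk hγ htop) hnot
        · refine Or.inr (.mk (steps_mono (le_self_add) hts) ?_)
          exact .xiBot (ord_pos_add_one α) (ord_lt_add_one α) (.xiHTop hα h1 h2)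
            (sim_mono (le_self_add) h1) ht3
            (.mk (ord_succ_lt_succ hγ) hbot)
  | flTopEps hα h1 =>
      injection hu with e1 e2
      obtain ⟨b, rfl, hb0, rfl⟩ := Ft_eq_lam_lift (S := S) e2.symm
      refine Or.inl (.mk hts (.xiTop hα h1 (fun t3 ht3 => ?_)))
      rw [S.TT_eps] at ht3
      exact absurd ht3 (Set.notMem_empty t3)
  | @flTop _ hα t1 t2 τ hτ h1 h2 =>
      injection hu with e1 e2
      obtain ⟨b, rfl, hb0, rfl⟩ := Ft_eq_lam_lift (S := S) e2.symm
      obtain ⟨b', rfl⟩ := Tm.exists_unlift hb0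
      cases h2 with
      | mk hγ hlead =>
      have hlead' : Lead S _ (S.Ht b') S.top := hlead
      have hbeta : ∀ (γ' : Ordinal.{0}) (t3 : Tm S.C),
          Step S γ' (Tm.app (Tm.lam b'.lift) t3) b' := by
        intro γ' t3
        have hb := Step.beta (S := S) γ' b'.lift t3
        rwa [Tm.subst0_lift] at hb
      rcases IH _ hγ b' hlead' with htop | hbot
      · refine Or.inl (.mk hts (.xiTop hα h1 (fun t3 ht3 => ?_)))
        cases htop with
        | mk st su => exact .mk hγ (.mk (steps_head (hbeta _ t3) st) su)
      · have hH : Succ S α (S.Ht (Tm.app (Tm.app S.XiT t1) (Tm.lam b'.lift))) S.top := by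
          refine .xiHTop hα h1 (fun t3 ht3 => ?_)
          cases hlead with
          | mk stH suH =>
              exact .mk hγ (.mk (steps_head (step_Ht (hbeta _ t3)) stH) suH)
        have hne : ∃ t3, t3 ∈ S.TT τ := by
          by_cases hω : τ = .omega
          · subst hω
            exact ⟨S.top, by rw [S.TT_omega]; exact Set.mem_univ _⟩
          · rcases sim_isTp h1 with hT1 | hh | hh
            · exact S.TT_nonempty hT1 hD
            · exact absurd hh hω
            · exact absurd hh hτ
        obtain ⟨t3, ht3⟩ := hne
        cases hbot with
        | mk stb sub =>
        refine Or.inr (.mk (steps_mono (le_self_add) hts) ?_)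
        exact .xiBot (ord_pos_add_one α) (ord_lt_add_one α) hH
          (sim_mono (le_self_add) h1) ht3
          (.mk (ord_succ_lt_succ hγ) (.mk (steps_head (hbeta _ t3) stb) sub))
  | hiTop hα hLL =>
      injection hu with e1 e2
      have e2' : Tm.lam s.lift = Tm.lam (Tm.lift _) := e2
      injection e2' with e3
      obtain rfl := Tm.lift_injective (C := S.C) e3
      cases hLL with
      | mk hγ hlead =>
      cases hlead with
      | mk st su =>
      exact Or.inl (.mk (steps_trans hts (steps_mono hγ.le st)) (succ_mono hγ.le su))
  | xiBot hα hγ hH h1 h3 hb =>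
      exact absurd hρ S.top_ne_bot


end ILM
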